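/- Let d be a positive integer. Let y, y' ∈ ℝ with |y| ≤ 1 and |y'| ≤ 1, and let x, x' : Fin (d+1) → ℝ satisfy x_0 = x'_0 = 1 and |x_j| ≤ 1/√d, |x'_j| ≤ 1/√d for all j ∈ {1,…,d}. Then (1/4)|y² − y'²| + (1/2) ∑_{j=0}^{d} |y·x_j − y'·x'_j| + (1/4) ∑_{j=0}^{d} |x_j² − x'_j²| + (1/4) ∑_{j=0}^{d} ∑_{h=0, h≠j}^{d} |x_j x_h − x'_j x'_h| ≤ 2 + 2√d + d/2. -/
import Mathlib
open Finset

lemma prod_diff_bound {a b c e A B : ℝ} (ha : |a| ≤ A) (hb : |b| ≤ B)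
    (hc : |c| ≤ A) (he : |e| ≤ B) : |a * b - c * e| ≤ 2 * (A * B) := by
  have hA : 0 ≤ A := (abs_nonneg a).trans ha
  calc |a * b - c * e| ≤ |a * b| + |c * e| := abs_sub _ _
    _ = |a| * |b| + |c| * |e| := by rw [abs_mul, abs_mul]
    _ ≤ A * B + A * B := add_le_add
        (mul_le_mul ha hb (abs_nonneg _) hA)
        (mul_le_mul hc he (abs_nonneg _) hA)
    _ = 2 * (A * B) := by ring

theorem logistic_sensitivity_bound (d : ℕ) (hd : 0 < d)
    (y y' : ℝ) (hy : |y| ≤ 1) (hy' : |y'| ≤ 1)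
    (x x' : Fin (d + 1) → ℝ)
    (hx0 : x 0 = 1) (hx0' : x' 0 = 1)
    (hx : ∀ j : Fin (d + 1), j ≠ 0 → |x j| ≤ 1 / Real.sqrt d)
    (hx' : ∀ j : Fin (d + 1), j ≠ 0 → |x' j| ≤ 1 / Real.sqrt d) :
    (1 / 4) * |y ^ 2 - y' ^ 2|
      + (1 / 2) * ∑ j, |y * x j - y' * x' j|
      + (1 / 4) * ∑ j, |(x j) ^ 2 - (x' j) ^ 2|
      + (1 / 4) * ∑ j, ∑ h ∈ Finset.univ.erase j, |x j * x h - x' j * x' h|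
    ≤ 2 + 2 * Real.sqrt d + (d : ℝ) / 2 := by
  have hd0 : (0:ℝ) < d := by exact_mod_cast hd
  have hsq : 0 < Real.sqrt d := Real.sqrt_pos.mpr hd0
  set s : ℝ := 1 / Real.sqrt d with hs_def
  have hs0 : 0 ≤ s := by positivity
  have hds : (d:ℝ) * s = Real.sqrt d := by
    rw [hs_def, mul_one_div, Real.div_sqrt]
  have hss : s * s = 1 / d := by
    rw [hs_def, div_mul_div_comm, one_mul, Real.mul_self_sqrt hd0.le]
  have h1 : |(1:ℝ)| ≤ 1 := by simp
  have hcard : (univ.erase (0 : Fin (d+1))).card = d := by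
    rw [card_erase_of_mem (mem_univ _), card_univ, Fintype.card_fin]
    omega
  -- term 1
  have hT1 : |y ^ 2 - y' ^ 2| ≤ 2 := by
    have := prod_diff_bound hy hy hy' hy'
    simpa [sq] using this
  -- term 2
  have hT2 : ∑ j, |y * x j - y' * x' j| ≤ 2 + 2 * Real.sqrt d := by
    rw [← Finset.add_sum_erase _ _ (mem_univ (0 : Fin (d+1)))]
    have h0 : |y * x 0 - y' * x' 0| ≤ 2 := by
      rw [hx0, hx0']
      simpa using prod_diff_bound hy h1 hy' h1
    have hrest : ∑ j ∈ univ.erase (0 : Fin (d+1)), |y * x j - y' * x' j|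
        ≤ (d : ℝ) * (2 * (1 * s)) := by
      have := Finset.sum_le_card_nsmul (univ.erase (0 : Fin (d+1)))
        (fun j => |y * x j - y' * x' j|) (2 * (1 * s))
        (fun j hj => prod_diff_bound hy (hx j (mem_erase.mp hj).1)
          hy' (hx' j (mem_erase.mp hj).1))
      rw [hcard, nsmul_eq_mul] at this
      exact this
    have : (d : ℝ) * (2 * (1 * s)) = 2 * Real.sqrt d := by
      rw [← hds]; ring
    linarith [hrest, this ▸ hrest]
  -- term 3
  have hT3 : ∑ j, |(x j) ^ 2 - (x' j) ^ 2| ≤ 2 := by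
    rw [← Finset.add_sum_erase _ _ (mem_univ (0 : Fin (d+1)))]
    have h0 : |(x 0) ^ 2 - (x' 0) ^ 2| = 0 := by rw [hx0, hx0']; simp
    have hrest : ∑ j ∈ univ.erase (0 : Fin (d+1)), |(x j) ^ 2 - (x' j) ^ 2|
        ≤ (d : ℝ) * (2 * (s * s)) := by
      have := Finset.sum_le_card_nsmul (univ.erase (0 : Fin (d+1)))
        (fun j => |(x j) ^ 2 - (x' j) ^ 2|) (2 * (s * s))
        (fun j hj => by
          have hj' := (mem_erase.mp hj).1
          simpa [sq] using prod_diff_bound (hx j hj') (hx j hj') (hx' j hj') (hx' j hj'))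
      rw [hcard, nsmul_eq_mul] at this
      exact this
    have heq : (d : ℝ) * (2 * (s * s)) = 2 := by
      rw [hss]; field_simp
    rw [h0, zero_add]
    linarith [heq ▸ hrest]
  -- term 4
  have hT4 : ∑ j, ∑ h ∈ Finset.univ.erase j, |x j * x h - x' j * x' h|
      ≤ 4 * Real.sqrt d + 2 * (d : ℝ) - 2 := by
    rw [← Finset.add_sum_erase _ _ (mem_univ (0 : Fin (d+1)))]
    -- inner sum at j = 0
    have hinner0 : ∑ h ∈ univ.erase (0 : Fin (d+1)), |x 0 * x h - x' 0 * x' h|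
        ≤ 2 * Real.sqrt d := by
      have := Finset.sum_le_card_nsmul (univ.erase (0 : Fin (d+1)))
        (fun h => |x 0 * x h - x' 0 * x' h|) (2 * (1 * s))
        (fun h hh => by
          have hh' := (mem_erase.mp hh).1
          rw [hx0, hx0']
          simpa using prod_diff_bound h1 (hx h hh') h1 (hx' h hh'))
      rw [hcard, nsmul_eq_mul] at this
      calc _ ≤ (d : ℝ) * (2 * (1 * s)) := this
        _ = 2 * Real.sqrt d := by rw [← hds]; ring
    -- inner sums for j ≠ 0
    have hinner : ∀ j ∈ univ.erase (0 : Fin (d+1)),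
        ∑ h ∈ univ.erase j, |x j * x h - x' j * x' h|
          ≤ 2 * s + ((d : ℝ) - 1) * (2 * (s * s)) := by
      intro j hj
      have hj' := (mem_erase.mp hj).1
      have h0mem : (0 : Fin (d+1)) ∈ univ.erase j :=
        mem_erase.mpr ⟨(Ne.symm hj'), mem_univ _⟩
      rw [← Finset.add_sum_erase _ _ h0mem]
      have hterm0 : |x j * x 0 - x' j * x' 0| ≤ 2 * s := by
        rw [hx0, hx0']
        simpa using prod_diff_bound (hx j hj') h1 (hx' j hj') h1
      have hcard2 : ((univ.erase j).erase (0 : Fin (d+1))).card = d - 1 := by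
        rw [card_erase_of_mem h0mem, card_erase_of_mem (mem_univ _),
          card_univ, Fintype.card_fin]
        omega
      have hrest : ∑ h ∈ (univ.erase j).erase (0 : Fin (d+1)),
          |x j * x h - x' j * x' h| ≤ ((d : ℝ) - 1) * (2 * (s * s)) := by
        have := Finset.sum_le_card_nsmul ((univ.erase j).erase (0 : Fin (d+1)))
          (fun h => |x j * x h - x' j * x' h|) (2 * (s * s))
          (fun h hh => by
            have hh' := (mem_erase.mp hh).1
            exact prod_diff_bound (hx j hj') (hx h hh') (hx' j hj') (hx' h hh'))
        rw [hcard2, nsmul_eq_mul, Nat.cast_sub hd, Nat.cast_one] at this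
        exact this
      linarith
    have hsum : ∑ j ∈ univ.erase (0 : Fin (d+1)),
        ∑ h ∈ univ.erase j, |x j * x h - x' j * x' h|
        ≤ (d : ℝ) * (2 * s + ((d : ℝ) - 1) * (2 * (s * s))) := by
      have := Finset.sum_le_card_nsmul (univ.erase (0 : Fin (d+1)))
        (fun j => ∑ h ∈ univ.erase j, |x j * x h - x' j * x' h|)
        (2 * s + ((d : ℝ) - 1) * (2 * (s * s))) hinner
      rw [hcard, nsmul_eq_mul] at this
      exact this
    have heq : (d : ℝ) * (2 * s + ((d : ℝ) - 1) * (2 * (s * s)))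
        = 2 * Real.sqrt d + 2 * (d : ℝ) - 2 := by
      rw [hss]
      field_simp
      nlinarith [hds, hss]
    linarith [heq ▸ hsum]
  linarith [hT1, hT2, hT3, hT4, Real.sqrt_nonneg (d : ℝ)]
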